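/- Let X be a partially ordered vector space with generating cone (X_+ - X_+ = X). If P and Q are linear projections on X such that P, I-P, Q, I-Q are all positive and P and Q have the same range, then P = Q. -/

import Mathlib

theorem order_projection_unique {X : Type*} [AddCommGroup X] [PartialOrder X] [IsOrderedAddMonoid X] [Module ℝ X]
    [PosSMulStrictMono ℝ X] [PosSMulReflectLT ℝ X]
    (hgen : ∀ x : X, ∃ a b : X, 0 ≤ a ∧ 0 ≤ b ∧ x = a - b)
    (P Q : X →ₗ[ℝ] X) (hP : P ∘ₗ P = P) (hQ : Q ∘ₗ Q = Q)
    (hPpos : ∀ x : X, 0 ≤ x → 0 ≤ P x) (hPcompl : ∀ x : X, 0 ≤ x → 0 ≤ x - P x)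
    (hQpos : ∀ x : X, 0 ≤ x → 0 ≤ Q x) (hQcompl : ∀ x : X, 0 ≤ x → 0 ≤ x - Q x)
    (hrange : LinearMap.range P = LinearMap.range Q) :
    P = Q := by
  -- Q fixes the range of P, and P fixes the range of Q
  have hQfix : ∀ x : X, Q (P x) = P x := by
    intro x
    have : P x ∈ LinearMap.range Q := hrange ▸ LinearMap.mem_range_self P x
    obtain ⟨z, hz⟩ := this
    calc Q (P x) = Q (Q z) := by rw [hz]
    _ = (Q ∘ₗ Q) z := rfl
    _ = Q z := by rw [hQ]
    _ = P x := hz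
  have hPfix : ∀ x : X, P (Q x) = Q x := by
    intro x
    have : Q x ∈ LinearMap.range P := hrange ▸ LinearMap.mem_range_self Q x
    obtain ⟨z, hz⟩ := this
    calc P (Q x) = P (P z) := by rw [hz]
    _ = (P ∘ₗ P) z := rfl
    _ = P z := by rw [hP]
    _ = Q x := hz
  have key : ∀ x : X, 0 ≤ x → P x = Q x := by
    intro x hx
    have h1 : P x ≤ Q x := by
      have := hQpos _ (hPcompl x hx)
      rw [map_sub, hQfix] at this
      exact sub_nonneg.mp this
    have h2 : Q x ≤ P x := by
      have := hPpos _ (hQcompl x hx)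
      rw [map_sub, hPfix] at this
      exact sub_nonneg.mp this
    exact le_antisymm h1 h2
  ext x
  obtain ⟨a, b, ha, hb, hab⟩ := hgen x
  simp only [hab, map_sub, key a ha, key b hb]
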